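/- Let U ⊆ ℂ be open, let g, h : U → ℂ be holomorphic with g' nowhere zero on U. Then the complex-valued function f := g²·h'/g' + 2·g·h/(1 + |g|²) satisfies the Jacobi equation associated to g on U: Δf + (8|g'|²/(1 + |g|²)²)·f = 0. -/

import Mathlib

open Complex

/-- Flat Laplacian `∂²/∂x² + ∂²/∂y²` on `ℂ ≅ ℝ²`, applied to a complex-valued function
(i.e. to its real and imaginary parts separately). -/
noncomputable def lapC (f : ℂ → ℂ) (z : ℂ) : ℂ :=
  fderiv ℝ (fun w => fderiv ℝ f w 1) z 1
    + fderiv ℝ (fun w => fderiv ℝ f w Complex.I) z Complex.I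

noncomputable def wirL (a b : ℂ) : ℂ →L[ℝ] ℂ :=
  a • (ContinuousLinearMap.id ℝ ℂ) + b • (Complex.conjCLE.toContinuousLinearMap)

@[simp] lemma wirL_apply (a b v : ℂ) : wirL a b v = a * v + b * (starRingEnd ℂ) v := by
  simp [wirL, smul_eq_mul]

def HasWirAt (f : ℂ → ℂ) (a b w : ℂ) : Prop := HasFDerivAt f (wirL a b) w

lemma HasDerivAt.hasWirAt {f : ℂ → ℂ} {a w : ℂ} (h : HasDerivAt f a w) :
    HasWirAt f a 0 w := by
  have h' := (h.hasFDerivAt).restrictScalars ℝ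
  have e : (ContinuousLinearMap.smulRight (1 : ℂ →L[ℂ] ℂ) a).restrictScalars ℝ = wirL a 0 := by
    ext v; simp [mul_comm]
  exact (show HasFDerivAt f (wirL a 0) w from e ▸ h')

lemma hasWirAt_const (c w : ℂ) : HasWirAt (fun _ => c) 0 0 w := by
  have h0 : (0 : ℂ →L[ℝ] ℂ) = wirL 0 0 := by ext v; simp
  exact (show HasFDerivAt (fun _ => c) (wirL 0 0) w from h0 ▸ hasFDerivAt_const c w)

lemma HasWirAt.congr_ab {f : ℂ → ℂ} {a b w a' b' : ℂ} (h : HasWirAt f a b w)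
    (ha : a = a') (hb : b = b') : HasWirAt f a' b' w := ha ▸ hb ▸ h

lemma HasWirAt.add {f g : ℂ → ℂ} {a b a' b' w : ℂ} (hf : HasWirAt f a b w)
    (hg : HasWirAt g a' b' w) : HasWirAt (fun x => f x + g x) (a + a') (b + b') w := by
  have e : wirL a b + wirL a' b' = wirL (a + a') (b + b') := by
    ext v; simp; ring
  exact (show HasFDerivAt _ (wirL (a+a') (b+b')) w from e ▸ (HasFDerivAt.add hf hg))

lemma HasWirAt.sub {f g : ℂ → ℂ} {a b a' b' w : ℂ} (hf : HasWirAt f a b w)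
    (hg : HasWirAt g a' b' w) : HasWirAt (fun x => f x - g x) (a - a') (b - b') w := by
  have e : wirL a b - wirL a' b' = wirL (a - a') (b - b') := by
    ext v; simp; ring
  exact (show HasFDerivAt _ (wirL (a-a') (b-b')) w from e ▸ (HasFDerivAt.sub hf hg))

lemma HasWirAt.neg {f : ℂ → ℂ} {a b w : ℂ} (hf : HasWirAt f a b w) :
    HasWirAt (fun x => -(f x)) (-a) (-b) w := by
  have e : -wirL a b = wirL (-a) (-b) := by ext v; simp; ring
  exact (show HasFDerivAt _ (wirL (-a) (-b)) w from e ▸ HasFDerivAt.neg hf)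

lemma HasWirAt.mul {f g : ℂ → ℂ} {a b a' b' w : ℂ} (hf : HasWirAt f a b w)
    (hg : HasWirAt g a' b' w) :
    HasWirAt (fun x => f x * g x) (f w * a' + g w * a) (f w * b' + g w * b) w := by
  have e : f w • wirL a' b' + g w • wirL a b
      = wirL (f w * a' + g w * a) (f w * b' + g w * b) := by
    ext v; simp [smul_eq_mul]; ring
  exact (show HasFDerivAt _ (wirL (f w * a' + g w * a) (f w * b' + g w * b)) w from e ▸ (HasFDerivAt.mul hf hg))

lemma HasWirAt.conj {f : ℂ → ℂ} {a b w : ℂ} (hf : HasWirAt f a b w) :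
    HasWirAt (fun x => (starRingEnd ℂ) (f x)) ((starRingEnd ℂ) b) ((starRingEnd ℂ) a) w := by
  have h' := (Complex.conjCLE.toContinuousLinearMap.hasFDerivAt (x := f w)).comp w hf
  have e : Complex.conjCLE.toContinuousLinearMap.comp (wirL a b)
      = wirL ((starRingEnd ℂ) b) ((starRingEnd ℂ) a) := by
    ext v
    simp [wirL_apply, map_add, map_mul]
    ring
  exact (show HasFDerivAt _ (wirL ((starRingEnd ℂ) b) ((starRingEnd ℂ) a)) w from e ▸ h')

lemma HasWirAt.inv {f : ℂ → ℂ} {a b w : ℂ} (hf : HasWirAt f a b w) (hne : f w ≠ 0) :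
    HasWirAt (fun x => (f x)⁻¹) (-((f w * f w)⁻¹ * a)) (-((f w * f w)⁻¹ * b)) w := by
  have h' := (hasFDerivAt_inv' (𝕜 := ℝ) hne).comp w hf
  have e : (-ContinuousLinearMap.mulLeftRight ℝ ℂ (f w)⁻¹ (f w)⁻¹).comp (wirL a b)
      = wirL (-((f w * f w)⁻¹ * a)) (-((f w * f w)⁻¹ * b)) := by
    ext v
    simp [wirL_apply, mul_inv]
    ring
  exact (show HasFDerivAt _ (wirL (-((f w * f w)⁻¹ * a)) (-((f w * f w)⁻¹ * b))) w from e ▸ h')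

lemma lapC_eq {U : Set ℂ} (hU : IsOpen U) {z : ℂ} (hz : z ∈ U)
    {f p s : ℂ → ℂ} {P1 S1 P2 S2 : ℂ}
    (hf : ∀ w ∈ U, HasWirAt f (p w) (s w) w)
    (hp : HasWirAt p P1 S1 z) (hs : HasWirAt s P2 S2 z) :
    lapC f z = 2 * (S1 + P2) := by
  have e1 : (fun w => fderiv ℝ f w 1) =ᶠ[nhds z] (fun w => p w + s w) := by
    filter_upwards [hU.mem_nhds hz] with w hw
    rw [(hf w hw).fderiv]
    simp
  have e2 : (fun w => fderiv ℝ f w Complex.I)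
      =ᶠ[nhds z] (fun w => p w * Complex.I + s w * (-Complex.I)) := by
    filter_upwards [hU.mem_nhds hz] with w hw
    rw [(hf w hw).fderiv]
    simp [Complex.conj_I]
  have d1 : HasFDerivAt (fun w => p w + s w) (wirL (P1 + P2) (S1 + S2)) z := hp.add hs
  have hpI : HasWirAt (fun w => p w * Complex.I) (P1 * Complex.I) (S1 * Complex.I) z := by
    exact (hp.mul (hasWirAt_const Complex.I z)).congr_ab (by ring) (by ring)
  have hsI : HasWirAt (fun w => s w * (-Complex.I)) (P2 * (-Complex.I)) (S2 * (-Complex.I)) z := by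
    exact (hs.mul (hasWirAt_const (-Complex.I) z)).congr_ab (by ring) (by ring)
  have d2 : HasFDerivAt (fun w => p w * Complex.I + s w * (-Complex.I))
      (wirL (P1 * Complex.I + P2 * (-Complex.I)) (S1 * Complex.I + S2 * (-Complex.I))) z :=
    hpI.add hsI
  rw [lapC, e1.fderiv_eq, e2.fderiv_eq, d1.fderiv, d2.fderiv]
  simp only [wirL_apply, Complex.conj_I, map_one]
  ring_nf
  simp [Complex.I_sq]
  ring

lemma absSqC (w : ℂ) : ((‖w‖ : ℝ) : ℂ) ^ 2 = w * (starRingEnd ℂ) w := by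
  rw [← Complex.ofReal_pow, Complex.sq_norm]
  exact (Complex.mul_conj w).symm

set_option maxHeartbeats 1000000 in
/-- For holomorphic `g, h` with `g'` nowhere zero, the complex-valued function
`f = g²h'/g' + 2gh/(1 + |g|²)` satisfies the Jacobi equation
`Δf + (8|g'|²/(1 + |g|²)²) f = 0` associated to `g`. -/
theorem deformation_function_is_complex_jacobi_function
    (U : Set ℂ) (hU : IsOpen U) (g h : ℂ → ℂ)
    (hg : DifferentiableOn ℂ g U) (hh : DifferentiableOn ℂ h U)
    (hg' : ∀ z ∈ U, deriv g z ≠ 0) :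
    ∀ z ∈ U,
      lapC (fun w =>
          (g w) ^ 2 * deriv h w / deriv g w
            + 2 * g w * h w / ((1 + ‖g w‖ ^ 2 : ℝ) : ℂ)) z
        + ((8 * ‖deriv g z‖ ^ 2 / (1 + ‖g z‖ ^ 2) ^ 2 : ℝ) : ℂ)
          * ((g z) ^ 2 * deriv h z / deriv g z
            + 2 * g z * h z / ((1 + ‖g z‖ ^ 2 : ℝ) : ℂ)) = 0 := by
  intro z hz
  -- analyticity and derivatives
  have hga : AnalyticOnNhd ℂ g U := hg.analyticOnNhd hU
  have hha : AnalyticOnNhd ℂ h U := hh.analyticOnNhd hU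
  have hg1a : AnalyticOnNhd ℂ (deriv g) U := hga.deriv
  have hh1a : AnalyticOnNhd ℂ (deriv h) U := hha.deriv
  have hg2a : AnalyticOnNhd ℂ (deriv (deriv g)) U := hg1a.deriv
  have hh2a : AnalyticOnNhd ℂ (deriv (deriv h)) U := hh1a.deriv
  have Dg : ∀ w ∈ U, HasDerivAt g (deriv g w) w := fun w hw =>
    (hga w hw).differentiableAt.hasDerivAt
  have Dh : ∀ w ∈ U, HasDerivAt h (deriv h w) w := fun w hw =>
    (hha w hw).differentiableAt.hasDerivAt
  have Dg1 : ∀ w ∈ U, HasDerivAt (deriv g) (deriv (deriv g) w) w := fun w hw =>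
    (hg1a w hw).differentiableAt.hasDerivAt
  have Dh1 : ∀ w ∈ U, HasDerivAt (deriv h) (deriv (deriv h) w) w := fun w hw =>
    (hh1a w hw).differentiableAt.hasDerivAt
  have Dg2 : HasDerivAt (deriv (deriv g)) (deriv (deriv (deriv g)) z) z :=
    (hg2a z hz).differentiableAt.hasDerivAt
  have Dh2 : HasDerivAt (deriv (deriv h)) (deriv (deriv (deriv h)) z) z :=
    (hh2a z hz).differentiableAt.hasDerivAt
  -- cast lemmas
  have hcast : ∀ w : ℂ, ((1 + ‖g w‖ ^ 2 : ℝ) : ℂ)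
      = 1 + g w * (starRingEnd ℂ) (g w) := by
    intro w
    push_cast
    rw [absSqC]
  have hqne : ∀ w ∈ U, (1 + g w * (starRingEnd ℂ) (g w)) ≠ 0 := by
    intro w _
    rw [← hcast w]
    exact_mod_cast (by positivity : (1 + ‖g w‖ ^ 2 : ℝ) ≠ 0)
  have hco : ((8 * ‖deriv g z‖ ^ 2 / (1 + ‖g z‖ ^ 2) ^ 2 : ℝ) : ℂ)
      = 8 * (deriv g z * (starRingEnd ℂ) (deriv g z))
        / (1 + g z * (starRingEnd ℂ) (g z)) ^ 2 := by
    push_cast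
    rw [absSqC, absSqC]
  -- the function F and its Wirtinger data
  have hFeq : (fun w =>
      (g w) ^ 2 * deriv h w / deriv g w
        + 2 * g w * h w / ((1 + ‖g w‖ ^ 2 : ℝ) : ℂ))
      = (fun w => g w * g w * deriv h w * (deriv g w)⁻¹
        + 2 * g w * h w * (1 + g w * (starRingEnd ℂ) (g w))⁻¹) := by
    funext w
    rw [hcast w]
    ring
  have hF : ∀ w ∈ U, HasWirAt
      (fun w => g w * g w * deriv h w * (deriv g w)⁻¹
        + 2 * g w * h w * (1 + g w * (starRingEnd ℂ) (g w))⁻¹)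
      ((fun w =>
        2 * g w * deriv g w * deriv h w * (deriv g w)⁻¹
        + g w * g w * deriv (deriv h) w * (deriv g w)⁻¹
        - g w * g w * deriv h w * deriv (deriv g) w * (deriv g w * deriv g w)⁻¹
        + (2 * deriv g w * h w + 2 * g w * deriv h w)
            * (1 + g w * (starRingEnd ℂ) (g w))⁻¹
        - 2 * g w * h w * deriv g w * (starRingEnd ℂ) (g w)
            * ((1 + g w * (starRingEnd ℂ) (g w)) * (1 + g w * (starRingEnd ℂ) (g w)))⁻¹) w)
      ((fun w => -(2 * g w * g w * h w * (starRingEnd ℂ) (deriv g w))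
          * ((1 + g w * (starRingEnd ℂ) (g w)) * (1 + g w * (starRingEnd ℂ) (g w)))⁻¹) w)
      w := by
    intro w hw
    have wg := (Dg w hw).hasWirAt
    have wh := (Dh w hw).hasWirAt
    have wg1 := (Dg1 w hw).hasWirAt
    have wh1 := (Dh1 w hw).hasWirAt
    have wcg := wg.conj
    have wq := (hasWirAt_const 1 w).add (wg.mul wcg)
    have wqi := wq.inv (hqne w hw)
    have wg1i := wg1.inv (hg' w hw)
    have wA := ((wg.mul wg).mul wh1).mul wg1i
    have wB := (((hasWirAt_const 2 w).mul wg).mul wh).mul wqi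
    refine (wA.add wB).congr_ab ?_ ?_
    · simp only [map_zero]
      ring
    · simp only [map_zero]
      ring
  -- Wirtinger data of p and s at z
  have c2 := hasWirAt_const (2 : ℂ) z
  have zg := (Dg z hz).hasWirAt
  have zh := (Dh z hz).hasWirAt
  have zg1 := (Dg1 z hz).hasWirAt
  have zh1 := (Dh1 z hz).hasWirAt
  have zg2 := Dg2.hasWirAt
  have zh2 := Dh2.hasWirAt
  have zcg := zg.conj
  have zcg1 := zg1.conj
  have zq := (hasWirAt_const 1 z).add (zg.mul zcg)
  have zqi := zq.inv (hqne z hz)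
  have zg1i := zg1.inv (hg' z hz)
  have zqqi := (zq.mul zq).inv (mul_ne_zero (hqne z hz) (hqne z hz))
  have zg1g1i := (zg1.mul zg1).inv (mul_ne_zero (hg' z hz) (hg' z hz))
  have t1 := (((c2.mul zg).mul zg1).mul zh1).mul zg1i
  have t2 := ((zg.mul zg).mul zh2).mul zg1i
  have t3 := (((zg.mul zg).mul zh1).mul zg2).mul zg1g1i
  have t4 := (((c2.mul zg1).mul zh).add ((c2.mul zg).mul zh1)).mul zqi
  have t5 := (((((c2.mul zg).mul zh).mul zg1).mul zcg)).mul zqqi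
  have hp := (((t1.add t2).sub t3).add t4).sub t5
  have hs := (((((c2.mul zg).mul zg).mul zh).mul zcg1).neg).mul zqqi
  have hl := lapC_eq hU hz hF hp hs
  rw [hFeq, hl, hco, hcast z]
  simp only [map_zero, mul_zero, zero_mul, add_zero, zero_add, mul_one, one_mul, map_one,
    neg_zero]
  set Q := 1 + g z * (starRingEnd ℂ) (g z) with hQ
  have hQne : Q ≠ 0 := by rw [hQ]; exact hqne z hz
  have hR : Q * Q⁻¹ = 1 := mul_inv_cancel₀ hQne
  have hV : deriv g z * (deriv g z)⁻¹ = 1 := mul_inv_cancel₀ (hg' z hz)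
  simp only [div_eq_mul_inv, mul_inv, ← inv_pow]
  linear_combination
    (16 * (g z) ^ 2 * h z * deriv g z * (starRingEnd ℂ) (g z) * (starRingEnd ℂ) (deriv g z)
        * (Q⁻¹) ^ 3
      + 16 * g z * h z * deriv g z * (starRingEnd ℂ) (deriv g z) * (Q⁻¹) ^ 2) * hR
    + (8 * (g z) ^ 2 * deriv h z * (starRingEnd ℂ) (deriv g z) * (Q⁻¹) ^ 2) * hV
    + (-16 * g z * h z * deriv g z * (starRingEnd ℂ) (deriv g z) * (Q⁻¹) ^ 3) * hQ
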